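/- Every finite subgroup of GL(2, ℝ) is either cyclic or dihedral. -/

import Mathlib

open Matrix

namespace Stmt0Aux

abbrev M2 := Matrix (Fin 2) (Fin 2) ℝ
abbrev GL2 := Matrix.GeneralLinearGroup (Fin 2) ℝ

lemma rot_shape (A : M2) (h : Aᵀ * A = 1) (hdet : A.det = 1) :
    A 1 1 = A 0 0 ∧ A 0 1 = - A 1 0 := by
  have e00 := congrFun (congrFun h 0) 0
  have e01 := congrFun (congrFun h 0) 1
  have e11 := congrFun (congrFun h 1) 1
  simp [Matrix.mul_apply, Fin.sum_univ_two, Matrix.one_apply, Matrix.transpose_apply] at e00 e01 e11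
  rw [Matrix.det_fin_two] at hdet
  constructor
  · linear_combination -(A 1 1) * hdet - (A 0 1) * e01 + (A 0 0) * e11
  · linear_combination (A 0 0) * e01 - (A 1 0) * hdet - (A 0 1) * e00

lemma refl_shape (A : M2) (h : Aᵀ * A = 1) (hdet : A.det = -1) :
    A 1 1 = - A 0 0 ∧ A 0 1 = A 1 0 := by
  have e00 := congrFun (congrFun h 0) 0
  have e01 := congrFun (congrFun h 0) 1
  have e11 := congrFun (congrFun h 1) 1
  simp [Matrix.mul_apply, Fin.sum_univ_two, Matrix.one_apply, Matrix.transpose_apply] at e00 e01 e11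
  rw [Matrix.det_fin_two] at hdet
  constructor
  · linear_combination (A 1 1) * hdet + (A 0 1) * e01 - (A 0 0) * e11
  · linear_combination (A 0 0) * e01 - (A 1 0) * hdet - (A 0 1) * e00

lemma isCyclic_aux {L : Type*} [Group L] [Finite L] (φ : L →* GL2)
    (hinj : Function.Injective φ)
    (horth : ∀ x : L, ((φ x : GL2) : M2)ᵀ * ((φ x : GL2) : M2) = 1)
    (hdet : ∀ x : L, ((φ x : GL2) : M2).det = 1) : IsCyclic L := by
  set m : L → M2 := fun x => ((φ x : GL2) : M2) with hm
  have shape : ∀ x : L, m x 1 1 = m x 0 0 ∧ m x 0 1 = - m x 1 0 :=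
    fun x => rot_shape (m x) (horth x) (hdet x)
  have hmul : ∀ x y : L, m (x * y) = m x * m y := by
    intro x y; simp [hm, _root_.map_mul]
  have hone : m 1 = 1 := by simp [hm, _root_.map_one]
  let ψ : L →* ℂ :=
  { toFun := fun x => (m x 0 0 : ℂ) + (m x 1 0 : ℂ) * Complex.I
    map_one' := by
      show (m 1 0 0 : ℂ) + (m 1 1 0 : ℂ) * Complex.I = 1
      rw [hone]; simp [Matrix.one_apply]
    map_mul' := by
      intro x y
      show (m (x*y) 0 0 : ℂ) + (m (x*y) 1 0 : ℂ) * Complex.I =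
        ((m x 0 0 : ℂ) + (m x 1 0 : ℂ) * Complex.I) * ((m y 0 0 : ℂ) + (m y 1 0 : ℂ) * Complex.I)
      have hx := shape x; have hy := shape y
      have h00 : m (x*y) 0 0 = m x 0 0 * m y 0 0 + m x 0 1 * m y 1 0 := by
        rw [hmul]; simp [Matrix.mul_apply, Fin.sum_univ_two]
      have h10 : m (x*y) 1 0 = m x 1 0 * m y 0 0 + m x 1 1 * m y 1 0 := by
        rw [hmul]; simp [Matrix.mul_apply, Fin.sum_univ_two]
      rw [h00, h10, hx.1, hx.2]
      push_cast
      linear_combination (-(m x 1 0 : ℂ) * (m y 1 0 : ℂ)) * Complex.I_sq }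
  apply isCyclic_of_subgroup_isDomain (R := ℂ) ψ
  intro x y hxy
  simp only [ψ, MonoidHom.coe_mk, OneHom.coe_mk, Complex.ext_iff, Complex.add_re, Complex.add_im,
    Complex.mul_re, Complex.mul_im, Complex.I_re, Complex.I_im, Complex.ofReal_re,
    Complex.ofReal_im] at hxy
  obtain ⟨h1, h2⟩ := hxy
  simp only [mul_zero, mul_one, zero_sub, sub_zero, zero_add, add_zero, neg_neg] at h1 h2
  apply hinj
  apply Units.ext
  ext i j
  fin_cases i <;> fin_cases j
  · exact h1
  · show m x 0 1 = m y 0 1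
    rw [(shape x).2, (shape y).2, h2]
  · exact h2
  · show m x 1 1 = m y 1 1
    rw [(shape x).1, (shape y).1, h1]

lemma main_orth (K : Subgroup GL2) [Finite K]
    (horth : ∀ k : K, ((k : GL2) : M2)ᵀ * ((k : GL2) : M2) = 1) :
    IsCyclic K ∨ ∃ n : ℕ, 1 ≤ n ∧ Nonempty (K ≃* DihedralGroup n) := by
  classical
  set m : K → M2 := fun k => ((k : GL2) : M2) with hm
  have hmmul : ∀ x y : K, m (x*y) = m x * m y := fun x y => rfl
  have hdet_pm : ∀ k : K, (m k).det = 1 ∨ (m k).det = -1 := by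
    intro k
    have h := congrArg Matrix.det (horth k)
    rw [Matrix.det_mul, Matrix.det_transpose, Matrix.det_one] at h
    exact mul_self_eq_one_iff.mp h
  by_cases hall : ∀ k : K, (m k).det = 1
  · left
    exact isCyclic_aux K.subtype K.subtype_injective horth hall
  right
  push_neg at hall
  obtain ⟨s₀, hs₀⟩ := hall
  have hdets : (m s₀).det = -1 := (hdet_pm s₀).resolve_left hs₀
  -- the determinant-one subgroup
  set δ : K →* ℝˣ := (Matrix.GeneralLinearGroup.det).comp K.subtype with hδ
  have hker : ∀ x : K, x ∈ δ.ker ↔ (m x).det = 1 := by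
    intro x
    rw [MonoidHom.mem_ker, Units.ext_iff]
    simp [hδ, Matrix.GeneralLinearGroup.val_det_apply, hm]
  have hcyc : IsCyclic δ.ker := by
    apply isCyclic_aux (K.subtype.comp δ.ker.subtype)
      (K.subtype_injective.comp δ.ker.subtype_injective)
    · intro x; exact horth x.1
    · intro x; exact (hker x.1).mp x.2
  set n := Nat.card δ.ker with hn
  have hn1 : 1 ≤ n := Nat.card_pos
  haveI : NeZero n := ⟨by omega⟩
  obtain ⟨r, hr⟩ := IsCyclic.exists_generator (α := δ.ker)
  set r₀ : K := (r : K) with hr₀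
  have horder : orderOf r₀ = n := by
    rw [hr₀, Subgroup.orderOf_coe, hn]
    exact orderOf_eq_card_of_forall_mem_zpowers hr
  -- shape facts for s₀
  have hs_shape := refl_shape (m s₀) (horth s₀) hdets
  have hcd : (m s₀ 0 0) ^ 2 + (m s₀ 1 0) ^ 2 = 1 := by
    have h := hdets
    rw [Matrix.det_fin_two, hs_shape.1, hs_shape.2] at h
    linear_combination -h
  have coe_inj : Function.Injective (fun k : K => m k) := by
    intro a b hab
    exact Subtype.ext (Units.ext hab)
  have hs2 : s₀ * s₀ = 1 := by
    apply coe_inj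
    show m (s₀ * s₀) = m 1
    rw [hmmul]
    have : m (1 : K) = 1 := rfl
    rw [this]
    ext i j
    fin_cases i <;> fin_cases j
    · show (m s₀ * m s₀) 0 0 = (1 : M2) 0 0
      simp [Matrix.mul_apply, Fin.sum_univ_two, Matrix.one_apply, hs_shape.1, hs_shape.2]
      linear_combination hcd
    · show (m s₀ * m s₀) 0 1 = (1 : M2) 0 1
      simp [Matrix.mul_apply, Fin.sum_univ_two, Matrix.one_apply, hs_shape.1, hs_shape.2]
      ring
    · show (m s₀ * m s₀) 1 0 = (1 : M2) 1 0
      simp [Matrix.mul_apply, Fin.sum_univ_two, Matrix.one_apply, hs_shape.1, hs_shape.2]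
      ring
    · show (m s₀ * m s₀) 1 1 = (1 : M2) 1 1
      simp [Matrix.mul_apply, Fin.sum_univ_two, Matrix.one_apply, hs_shape.1, hs_shape.2]
      linear_combination hcd
  have hsinv : s₀⁻¹ = s₀ := inv_eq_of_mul_eq_one_right hs2
  -- r₀ is a rotation
  have hdet_r : (m r₀).det = 1 := (hker r₀).mp r.2
  have hr_shape := rot_shape (m r₀) (horth r₀) hdet_r
  -- the transpose of m r₀ is the matrix of r₀⁻¹
  have hrinv : m (r₀⁻¹) = (m r₀)ᵀ := by
    have h1 : m r₀ * m (r₀⁻¹) = 1 := by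
      rw [← hmmul, mul_inv_cancel]; rfl
    calc m (r₀⁻¹) = ((m r₀)ᵀ * m r₀) * m (r₀⁻¹) := by rw [horth r₀, one_mul]
    _ = (m r₀)ᵀ * (m r₀ * m (r₀⁻¹)) := by rw [mul_assoc]
    _ = (m r₀)ᵀ := by rw [h1, mul_one]
  have hconj1 : s₀ * r₀ * s₀ = r₀⁻¹ := by
    apply coe_inj
    show m (s₀ * r₀ * s₀) = m r₀⁻¹
    rw [show m (s₀ * r₀ * s₀) = m s₀ * m r₀ * m s₀ by rw [← hmmul, ← hmmul], hrinv]
    ext i j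
    fin_cases i <;> fin_cases j
    · show (m s₀ * m r₀ * m s₀) 0 0 = (m r₀)ᵀ 0 0
      simp [Matrix.mul_apply, Fin.sum_univ_two, Matrix.transpose_apply,
        hs_shape.1, hs_shape.2, hr_shape.1, hr_shape.2]
      linear_combination (m r₀ 0 0) * hcd
    · show (m s₀ * m r₀ * m s₀) 0 1 = (m r₀)ᵀ 0 1
      simp [Matrix.mul_apply, Fin.sum_univ_two, Matrix.transpose_apply,
        hs_shape.1, hs_shape.2, hr_shape.1, hr_shape.2]
      linear_combination (m r₀ 1 0) * hcd
    · show (m s₀ * m r₀ * m s₀) 1 0 = (m r₀)ᵀ 1 0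
      simp [Matrix.mul_apply, Fin.sum_univ_two, Matrix.transpose_apply,
        hs_shape.1, hs_shape.2, hr_shape.1, hr_shape.2]
      linear_combination (-(m r₀ 1 0)) * hcd
    · show (m s₀ * m r₀ * m s₀) 1 1 = (m r₀)ᵀ 1 1
      simp [Matrix.mul_apply, Fin.sum_univ_two, Matrix.transpose_apply,
        hs_shape.1, hs_shape.2, hr_shape.1, hr_shape.2]
      linear_combination (m r₀ 0 0) * hcd
  -- the rotation parametrization
  set ρ : ZMod n → K := fun i => r₀ ^ (i.val) with hρ
  have ρ_zero : ρ 0 = 1 := by simp [hρ]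
  have ρ_add : ∀ i j : ZMod n, ρ (i + j) = ρ i * ρ j := by
    intro i j
    simp only [hρ]
    rw [ZMod.val_add, ← pow_add,
      show (i.val + j.val) % n = (i.val + j.val) % orderOf r₀ by rw [horder],
      pow_mod_orderOf]
  have hconjρ : ∀ i : ZMod n, s₀ * ρ i * s₀ = (ρ i)⁻¹ := by
    intro i
    simp only [hρ]
    calc s₀ * r₀ ^ i.val * s₀ = s₀ * r₀ ^ i.val * s₀⁻¹ := by rw [hsinv]
    _ = (s₀ * r₀ * s₀⁻¹) ^ i.val := by rw [conj_pow]
    _ = (r₀⁻¹) ^ i.val := by rw [hsinv, hconj1]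
    _ = (r₀ ^ i.val)⁻¹ := by rw [inv_pow]
  have ρ_neg : ∀ i : ZMod n, ρ (-i) = (ρ i)⁻¹ := by
    intro i
    have : ρ (-i) * ρ i = 1 := by rw [← ρ_add, neg_add_cancel, ρ_zero]
    exact eq_inv_of_mul_eq_one_left this
  have hswap : ∀ i : ZMod n, ρ i * s₀ = s₀ * ρ (-i) := by
    intro i
    rw [ρ_neg]
    have := hconjρ i
    calc ρ i * s₀ = (s₀ * s₀) * (ρ i * s₀) := by rw [hs2, one_mul]
    _ = s₀ * (s₀ * ρ i * s₀) := by group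
    _ = s₀ * (ρ i)⁻¹ := by rw [this]
  -- determinant values
  have hρ_mem : ∀ i : ZMod n, ρ i ∈ δ.ker := fun i => pow_mem r.2 _
  have hρ_det : ∀ i : ZMod n, (m (ρ i)).det = 1 := fun i => (hker _).mp (hρ_mem i)
  have hdet_mul : ∀ x y : K, (m (x*y)).det = (m x).det * (m y).det := by
    intro x y; rw [hmmul, Matrix.det_mul]
  have hsρ_det : ∀ i : ZMod n, (m (s₀ * ρ i)).det = -1 := by
    intro i; rw [hdet_mul, hdets, hρ_det]; ring
  -- the homomorphism from the dihedral group
  let f : DihedralGroup n → K := fun x =>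
    match x with
    | DihedralGroup.r i => ρ i
    | DihedralGroup.sr i => s₀ * ρ i
  have hf_mul : ∀ x y : DihedralGroup n, f (x * y) = f x * f y := by
    rintro (i | i) (j | j)
    · show ρ (i + j) = ρ i * ρ j
      exact ρ_add i j
    · show s₀ * ρ (j - i) = ρ i * (s₀ * ρ j)
      rw [← mul_assoc, hswap, mul_assoc, ← ρ_add]
      ring_nf
    · show s₀ * ρ (i + j) = (s₀ * ρ i) * ρ j
      rw [mul_assoc, ρ_add]
    · show ρ (j - i) = (s₀ * ρ i) * (s₀ * ρ j)
      calc ρ (j - i) = ρ (-i) * ρ j := by rw [← ρ_add]; ring_nf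
      _ = (s₀ * s₀) * (ρ (-i) * ρ j) := by rw [hs2, one_mul]
      _ = s₀ * (s₀ * ρ (-i)) * ρ j := by group
      _ = s₀ * (ρ i * s₀) * ρ j := by rw [← hswap]
      _ = (s₀ * ρ i) * (s₀ * ρ j) := by group
  have hρ_inj : Function.Injective ρ := by
    intro i j hij
    have hi : i.val < orderOf r₀ := by rw [horder]; exact ZMod.val_lt i
    have hj : j.val < orderOf r₀ := by rw [horder]; exact ZMod.val_lt j
    have := pow_injOn_Iio_orderOf (x := r₀) hi hj hij
    exact ZMod.val_injective n this
  have hf_inj : Function.Injective f := by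
    rintro (i | i) (j | j) hij
    · rw [hρ_inj hij]
    · exfalso
      have := congrArg (fun k => (m k).det) hij
      rw [hρ_det, hsρ_det] at this
      norm_num at this
    · exfalso
      have := congrArg (fun k => (m k).det) hij
      rw [hρ_det, hsρ_det] at this
      norm_num at this
    · have : ρ i = ρ j := mul_left_cancel (hij : s₀ * ρ i = s₀ * ρ j)
      rw [hρ_inj this]
  have hf_surj : Function.Surjective f := by
    intro k
    have key : ∀ k' : K, (m k').det = 1 → ∃ i : ZMod n, ρ i = k' := by
      intro k' hk'
      have hmem : (⟨k', (hker k').mpr hk'⟩ : δ.ker) ∈ Subgroup.zpowers r := hr _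
      rw [← mem_powers_iff_mem_zpowers] at hmem
      obtain ⟨v, hv⟩ := hmem
      refine ⟨(v : ZMod n), ?_⟩
      have : r₀ ^ v = k' := by
        have := congrArg (Subgroup.subtype δ.ker) hv
        simpa using this
      rw [← this, hρ]
      show r₀ ^ (((v : ℕ) : ZMod n).val) = r₀ ^ v
      rw [ZMod.val_natCast, show v % n = v % orderOf r₀ by rw [horder], pow_mod_orderOf]
    rcases hdet_pm k with h1 | h1
    · obtain ⟨i, hi⟩ := key k h1
      exact ⟨DihedralGroup.r i, hi⟩
    · have hdet2 : (m (s₀ * k)).det = 1 := by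
        rw [hdet_mul, hdets, h1]; ring
      obtain ⟨i, hi⟩ := key (s₀ * k) hdet2
      refine ⟨DihedralGroup.sr i, ?_⟩
      show s₀ * ρ i = k
      rw [hi, ← mul_assoc, hs2, one_mul]
  refine ⟨n, hn1, ⟨?_⟩⟩
  exact (MulEquiv.ofBijective (MonoidHom.mk' f hf_mul) ⟨hf_inj, hf_surj⟩).symm

end Stmt0Aux

open Stmt0Aux in
/-- Every finite subgroup of GL(2, ℝ) is either cyclic or dihedral. -/
theorem stmt_0 (G : Subgroup (Matrix.GeneralLinearGroup (Fin 2) ℝ)) [Finite G] :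
    IsCyclic G ∨ ∃ n : ℕ, 1 ≤ n ∧ Nonempty (G ≃* DihedralGroup n) := by
  classical
  cases nonempty_fintype G
  have hct : ∀ A : M2, Aᴴ = Aᵀ := fun A => by
    ext i j; simp [Matrix.conjTranspose_apply]
  set N : M2 := ∑ g : G, (((g : GL2) : M2)ᵀ * ((g : GL2) : M2)) with hN
  have hterm : ∀ g : G, (((g : GL2) : M2)ᵀ * ((g : GL2) : M2)).PosSemidef := by
    intro g
    have := Matrix.posSemidef_conjTranspose_mul_self ((g : GL2) : M2)
    rwa [hct] at this
  have hNposdef : N.PosDef := by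
    rw [hN, ← Finset.add_sum_erase _ _ (Finset.mem_univ (1 : G))]
    have h1 : (((1 : G) : GL2) : M2)ᵀ * (((1 : G) : GL2) : M2) = 1 := by
      simp
    rw [h1]
    apply Matrix.PosDef.add_posSemidef Matrix.PosDef.one
    exact Finset.sum_induction _ _ (fun a b ha hb => ha.add hb) Matrix.PosSemidef.zero
      (fun g _ => hterm g)
  have hInv : ∀ h : G, ((h : GL2) : M2)ᵀ * N * ((h : GL2) : M2) = N := by
    intro h
    rw [hN, Finset.mul_sum, Finset.sum_mul]
    apply Fintype.sum_equiv (Equiv.mulRight h)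
    intro g
    show (((h : GL2) : M2))ᵀ * ((((g : GL2) : M2))ᵀ * (((g : GL2) : M2))) * (((h : GL2) : M2))
      = (((g * h : G) : GL2) : M2)ᵀ * (((g * h : G) : GL2) : M2)
    have : (((g * h : G) : GL2) : M2) = ((g : GL2) : M2) * ((h : GL2) : M2) := rfl
    rw [this, Matrix.transpose_mul]
    noncomm_ring
  have hps := hNposdef.posSemidef
  set S : M2 := (open scoped MatrixOrder in CFC.sqrt N) with hSdef
  have hS2 : S * S = N := open scoped MatrixOrder in CFC.sqrt_mul_sqrt_self N hps.nonneg
  have hST : Sᵀ = S := by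
    have h : Sᴴ = S := open scoped MatrixOrder in (CFC.sqrt_nonneg N).posSemidef.1
    rw [← hct]
    exact h
  have hSunit : IsUnit S := by
    apply (Matrix.isUnit_iff_isUnit_det _).mpr
    apply isUnit_iff_ne_zero.mpr
    intro h0
    have : S.det * S.det = N.det := by rw [← Matrix.det_mul, hS2]
    rw [h0, mul_zero] at this
    exact absurd this.symm (ne_of_gt hNposdef.det_pos)
  obtain ⟨u, hu⟩ := hSunit
  set conj : GL2 ≃* GL2 := MulAut.conj u with hconj
  set K : Subgroup GL2 := Subgroup.map conj.toMonoidHom G with hK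
  have e : G ≃* K := MulEquiv.subgroupMap conj G
  haveI : Finite K := Finite.of_equiv G e.toEquiv
  set T : M2 := ((u⁻¹ : GL2) : M2) with hT
  have hST1 : S * T = 1 := by rw [← hu]; exact u.mul_inv
  have hTS1 : T * S = 1 := by rw [← hu]; exact u.inv_mul
  have hTt : Tᵀ = T := by
    have h1 : Tᵀ * S = 1 := by
      have := congrArg Matrix.transpose hST1
      rwa [Matrix.transpose_mul, Matrix.transpose_one, hST] at this
    calc Tᵀ = Tᵀ * (S * T) := by rw [hST1, mul_one]
    _ = (Tᵀ * S) * T := by rw [mul_assoc]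
    _ = T := by rw [h1, one_mul]
  have horth : ∀ k : K, ((k : GL2) : M2)ᵀ * ((k : GL2) : M2) = 1 := by
    intro k
    obtain ⟨g, hg, hk⟩ := k.2
    have hkval : ((k : GL2) : M2) = S * ((g : GL2) : M2) * T := by
      rw [← hk]
      show ((u * g * u⁻¹ : GL2) : M2) = _
      rw [Units.val_mul, Units.val_mul, hu]
    set A : M2 := ((g : GL2) : M2) with hA
    rw [hkval]
    calc (S * A * T)ᵀ * (S * A * T)
        = T * (Aᵀ * (S * S) * A) * T := by
          simp only [Matrix.transpose_mul, hST, hTt]; noncomm_ring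
    _ = T * (Aᵀ * N * A) * T := by rw [hS2]
    _ = T * N * T := by rw [hInv ⟨g, hg⟩]
    _ = T * (S * S) * T := by rw [hS2]
    _ = (T * S) * (S * T) := by noncomm_ring
    _ = 1 := by rw [hST1, hTS1, one_mul]
  rcases main_orth K horth with hc | ⟨n, hn, ⟨d⟩⟩
  · left
    exact isCyclic_of_surjective e.symm e.symm.surjective
  · right
    exact ⟨n, hn, ⟨e.trans d⟩⟩
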